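/- arXiv:2006.03567 — 2 statements merged into one kernel-verified Lean document; each statement's English description precedes it below -/
import Mathlib

section
/- lc(P_4 × P_5) = 14 for the grid graph P_4 × P_5. -/
open SimpleGraph

def shareVertex {V : Type*} (e f : Sym2 V) : Prop := ∃ v, v ∈ e ∧ v ∈ f

def SuperLineComplete {V : Type*} (G : SimpleGraph V) (r : ℕ) : Prop :=
  ∀ A B : Finset (Sym2 V), ↑A ⊆ G.edgeSet → ↑B ⊆ G.edgeSet →
    A.card = r → B.card = r → A ≠ B →
    ∃ e ∈ A, ∃ f ∈ B, e ≠ f ∧ shareVertex e f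

def lcIs {V : Type*} (G : SimpleGraph V) (k : ℕ) : Prop :=
  IsLeast {r : ℕ | 0 < r ∧ SuperLineComplete G r} k

def gridGraph (n m : ℕ) : SimpleGraph (Fin n × Fin m) :=
  (pathGraph n).boxProd (pathGraph m)


open Finset

open SimpleGraph Finset

noncomputable def lowEnd {α β : Type*} [LT β] [Nonempty α] [Nonempty β] (e : Sym2 (α × β)) : α × β :=
  @dite _ (∃ p : (α × β) × (α × β), e = s(p.1, p.2) ∧ p.1.2 < p.2.2) (Classical.dec _)
    (fun h => h.choose.1) (fun _ => Classical.arbitrary _)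

lemma lowEnd_mk {α β : Type*} [Preorder β] [Nonempty α] [Nonempty β] (u v : α × β)
    (h : u.2 < v.2) : lowEnd s(u, v) = u := by
  have hex : ∃ p : (α × β) × (α × β), s(u,v) = s(p.1, p.2) ∧ p.1.2 < p.2.2 := ⟨(u, v), rfl, h⟩
  rw [lowEnd, dif_pos hex]
  obtain ⟨h1, h2⟩ := hex.choose_spec
  rw [Sym2.eq_iff] at h1
  rcases h1 with ⟨h1, _⟩ | ⟨h1, h3⟩
  · exact h1.symm
  · rw [← h1, ← h3] at h2; exact absurd h2 (lt_asymm h)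

lemma horBound {α β : Type*} [DecidableEq α] [DecidableEq β] [LinearOrder β]
    [Nonempty α] [Nonempty β]
    (S : Finset (Sym2 (α × β))) (X : Finset (α × β))
    (hX : ∀ e ∈ S, ∀ v ∈ e, v ∈ X)
    (hstep : ∀ e ∈ S, ∃ u v : α × β, e = s(u, v) ∧ u.1 = v.1 ∧ u.2 ⋖ v.2) :
    S.card + (X.image Prod.fst).card ≤ X.card := by
  classical
  set marked := X.filter (fun v => ∀ w ∈ X, w.1 = v.1 → w.2 ≤ v.2) with hmdef
  have hmsub : marked ⊆ X := Finset.filter_subset _ _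
  have hR : (X.image Prod.fst).card ≤ marked.card := by
    apply Finset.card_le_card_of_surjOn Prod.fst
    intro i hi
    simp only [Finset.coe_image, Set.mem_image, Finset.mem_coe] at hi
    obtain ⟨v, hv, rfl⟩ := hi
    have hYne : (X.filter (fun w => w.1 = v.1)).Nonempty := ⟨v, by simp [hv]⟩
    have hCne : ((X.filter (fun w => w.1 = v.1)).image Prod.snd).Nonempty := hYne.image _
    obtain ⟨w, hw, hwc⟩ := Finset.mem_image.mp (Finset.max'_mem _ hCne)
    rw [Finset.mem_filter] at hw
    refine ⟨w, ?_, hw.2⟩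
    simp only [Finset.mem_coe, hmdef, Finset.mem_filter]
    refine ⟨hw.1, fun w' hw' hw'1 => ?_⟩
    rw [hwc]
    exact Finset.le_max' _ _ (Finset.mem_image.mpr ⟨w', Finset.mem_filter.mpr ⟨hw', by rw [hw'1, hw.2]⟩, rfl⟩)
  have himg : ∀ e ∈ S, lowEnd e ∈ X \ marked := by
    intro e he
    obtain ⟨u, v, rfl, h1, h2⟩ := hstep e he
    have hu : u ∈ X := hX _ he u (Sym2.mem_mk_left _ _)
    have hv : v ∈ X := hX _ he v (Sym2.mem_mk_right _ _)
    rw [lowEnd_mk u v h2.lt, Finset.mem_sdiff]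
    refine ⟨hu, fun hm => ?_⟩
    rw [hmdef, Finset.mem_filter] at hm
    exact absurd (hm.2 v hv h1.symm) (not_le.mpr h2.lt)
  have hinj : Set.InjOn lowEnd (↑S : Set (Sym2 (α × β))) := by
    intro e he f hf hef
    simp only [Finset.mem_coe] at he hf
    obtain ⟨u, v, rfl, h1, h2⟩ := hstep e he
    obtain ⟨u', v', rfl, h1', h2'⟩ := hstep f hf
    rw [lowEnd_mk u v h2.lt, lowEnd_mk u' v' h2'.lt] at hef
    subst hef
    have hv2 : v.2 = v'.2 := by
      rcases lt_trichotomy v.2 v'.2 with h | h | h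
      · exact absurd h (h2'.2 h2.lt)
      · exact h
      · exact absurd h (h2.2 h2'.lt)
    have : v = v' := Prod.ext (h1 ▸ h1') hv2
    rw [this]
  have h1 : S.card ≤ (X \ marked).card := Finset.card_le_card_of_injOn _ himg hinj
  have h2 : (X \ marked).card = X.card - marked.card := Finset.card_sdiff_of_subset hmsub
  have h3 : marked.card ≤ X.card := Finset.card_le_card hmsub
  omega


abbrev GV := Fin 4 × Fin 5

def ends {V : Type*} [DecidableEq V] (e : Sym2 V) : Finset V :=
  Sym2.lift ⟨fun a b => {a, b}, fun a b => Finset.pair_comm a b⟩ e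

@[simp] lemma ends_mk {V : Type*} [DecidableEq V] (a b : V) : ends s(a, b) = {a, b} := rfl

lemma mem_ends {V : Type*} [DecidableEq V] (v : V) (e : Sym2 V) : v ∈ ends e ↔ v ∈ e := by
  induction e using Sym2.ind with
  | _ a b => simp [Sym2.mem_iff]

lemma fin_covby {n : ℕ} (a b : Fin n) (h : a.val + 1 = b.val) : a ⋖ b := by
  constructor
  · rw [Fin.lt_def]; omega
  · intro c hc1 hc2
    rw [Fin.lt_def] at hc1 hc2
    omega

lemma grid_adj_cases {u v : GV} (h : (gridGraph 4 5).Adj u v) :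
    (u.1 = v.1 ∧ (u.2.val + 1 = v.2.val ∨ v.2.val + 1 = u.2.val)) ∨
    (u.2 = v.2 ∧ (u.1.val + 1 = v.1.val ∨ v.1.val + 1 = u.1.val)) := by
  rw [gridGraph, boxProd_adj, pathGraph_adj, pathGraph_adj] at h
  tauto

def verts (S : Finset (Sym2 GV)) : Finset GV := S.biUnion ends

lemma mem_verts {v : GV} {S : Finset (Sym2 GV)} : v ∈ verts S ↔ ∃ e ∈ S, v ∈ e := by
  simp [verts, mem_ends]

lemma count_bound (S : Finset (Sym2 GV)) (hS : ∀ e ∈ S, e ∈ (gridGraph 4 5).edgeSet)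
    (h10 : (verts S).card ≤ 10) : S.card ≤ (verts S).card + 3 := by
  classical
  set X := verts S with hXdef
  have hXmem : ∀ e ∈ S, ∀ v ∈ e, v ∈ X := fun e he v hv => mem_verts.mpr ⟨e, he, hv⟩
  set Hor := S.filter (fun e => ∀ u ∈ e, ∀ v ∈ e, u.1 = v.1) with hHdef
  set Ver := S.filter (fun e => ¬ ∀ u ∈ e, ∀ v ∈ e, u.1 = v.1) with hVdef
  have hsplit : Hor.card + Ver.card = S.card :=
    Finset.card_filter_add_card_filter_not _
  -- shape of edges
  have hshape : ∀ e ∈ S, ∃ u v : GV, e = s(u, v) ∧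
      ((u.1 = v.1 ∧ u.2.val + 1 = v.2.val) ∨ (u.2 = v.2 ∧ u.1.val + 1 = v.1.val)) := by
    intro e he
    induction e using Sym2.ind with
    | _ a b =>
      have hadj : (gridGraph 4 5).Adj a b := (SimpleGraph.mem_edgeSet _).mp (hS _ he)
      rcases grid_adj_cases hadj with ⟨h1, h2 | h2⟩ | ⟨h1, h2 | h2⟩
      · exact ⟨a, b, rfl, Or.inl ⟨h1, h2⟩⟩
      · exact ⟨b, a, Sym2.eq_swap, Or.inl ⟨h1.symm, h2⟩⟩
      · exact ⟨a, b, rfl, Or.inr ⟨h1, h2⟩⟩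
      · exact ⟨b, a, Sym2.eq_swap, Or.inr ⟨h1.symm, h2⟩⟩
  -- horizontal bound
  have hHor : Hor.card + (X.image Prod.fst).card ≤ X.card := by
    apply horBound
    · intro e he v hv
      exact hXmem e (Finset.mem_of_mem_filter _ he) v hv
    · intro e he
      rw [hHdef, Finset.mem_filter] at he
      obtain ⟨u, v, rfl, hc⟩ := hshape e he.1
      rcases hc with ⟨h1, h2⟩ | ⟨h1, h2⟩
      · exact ⟨u, v, rfl, h1, fin_covby _ _ h2⟩
      · exfalso
        have := he.2 u (Sym2.mem_mk_left _ _) v (Sym2.mem_mk_right _ _)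
        rw [this] at h2; omega
  -- vertical bound via swap
  have hVer : Ver.card + (X.image Prod.snd).card ≤ X.card := by
    have hmain := horBound (Ver.image (Sym2.map Prod.swap)) (X.image Prod.swap)
      (by
        intro e he v hv
        rw [Finset.mem_image] at he
        obtain ⟨e0, he0, rfl⟩ := he
        rw [Sym2.mem_map] at hv
        obtain ⟨w, hw, rfl⟩ := hv
        exact Finset.mem_image_of_mem _ (hXmem e0 (Finset.mem_of_mem_filter _ he0) w hw))
      (by
        intro e he
        rw [Finset.mem_image] at he
        obtain ⟨e0, he0, rfl⟩ := he
        rw [hVdef, Finset.mem_filter] at he0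
        obtain ⟨u, v, rfl, hc⟩ := hshape e0 he0.1
        rcases hc with ⟨h1, h2⟩ | ⟨h1, h2⟩
        · exfalso
          apply he0.2
          intro a ha b hb
          rw [Sym2.mem_iff] at ha hb
          rcases ha with rfl | rfl <;> rcases hb with rfl | rfl <;> simp [h1]
        · exact ⟨u.swap, v.swap, by rw [Sym2.map_pair_eq], h1, fin_covby _ _ h2⟩)
    rw [Finset.card_image_of_injective _ (Sym2.map.injective Prod.swap_injective),
        Finset.card_image_of_injective _ Prod.swap_injective,
        Finset.image_image] at hmain
    have : (Prod.fst ∘ Prod.swap : GV → Fin 5) = Prod.snd := rfl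
    rw [this] at hmain
    exact hmain
  -- product bound
  have hprod : X.card ≤ (X.image Prod.fst).card * (X.image Prod.snd).card := by
    have hsub : X ⊆ (X.image Prod.fst) ×ˢ (X.image Prod.snd) := by
      intro v hv
      rw [Finset.mem_product]
      exact ⟨Finset.mem_image_of_mem _ hv, Finset.mem_image_of_mem _ hv⟩
    calc X.card ≤ _ := Finset.card_le_card hsub
    _ = _ := Finset.card_product _ _
  have hr4 : (X.image Prod.fst).card ≤ 4 := by
    have := Finset.card_le_univ (X.image Prod.fst)
    simpa using this
  have hc5 : (X.image Prod.snd).card ≤ 5 := by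
    have := Finset.card_le_univ (X.image Prod.snd)
    simpa using this
  have key : ∀ r c : ℕ, r ≤ 4 → c ≤ 5 → X.card ≤ r * c → Hor.card + r ≤ X.card →
      Ver.card + c ≤ X.card → Hor.card + Ver.card ≤ X.card + 3 := by
    intro r c hr hc h1 h2 h3
    interval_cases r <;> interval_cases c <;> omega
  have := key _ _ hr4 hc5 hprod hHor hVer
  omega

lemma ends_card {e : Sym2 GV} (he : e ∈ (gridGraph 4 5).edgeSet) : (ends e).card = 2 := by
  induction e using Sym2.ind with
  | _ a b =>
    have hne : a ≠ b := ((SimpleGraph.mem_edgeSet _).mp he).ne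
    rw [ends_mk, Finset.card_insert_of_notMem (by simp [hne]), Finset.card_singleton]

lemma complete14 : SuperLineComplete (gridGraph 4 5) 14 := by
  classical
  intro A B hA hB hcA hcB hne
  by_contra hcon
  push_neg at hcon
  -- hcon : ∀ e ∈ A, ∀ f ∈ B, e ≠ f → ¬ shareVertex e f
  have hnosh : ∀ e ∈ A, ∀ f ∈ B, e ≠ f → ∀ v : GV, v ∈ e → v ∈ f → False := by
    intro e he f hf hef v hv1 hv2
    exact hcon e he f hf hef ⟨v, hv1, hv2⟩
  set S := A \ B with hSdef
  set T := B \ A with hTdef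
  set M := A ∩ B with hMdef
  have hScard : S.card + M.card = 14 := by rw [hSdef, hMdef, Finset.card_sdiff_add_card_inter, hcA]
  have hTcard : T.card + M.card = 14 := by
    rw [hTdef, hMdef, Finset.inter_comm, Finset.card_sdiff_add_card_inter, hcB]
  -- disjointness of vertex sets
  have hST : Disjoint (verts S) (verts T) := by
    rw [Finset.disjoint_left]
    intro v hv1 hv2
    obtain ⟨e, he, hve⟩ := mem_verts.mp hv1
    obtain ⟨f, hf, hvf⟩ := mem_verts.mp hv2
    have heA : e ∈ A := (Finset.mem_sdiff.mp he).1
    have hfB : f ∈ B := (Finset.mem_sdiff.mp hf).1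
    have hef : e ≠ f := fun h => (Finset.mem_sdiff.mp he).2 (h ▸ hfB)
    exact hnosh e heA f hfB hef v hve hvf
  have hSM : Disjoint (verts S) (verts M) := by
    rw [Finset.disjoint_left]
    intro v hv1 hv2
    obtain ⟨e, he, hve⟩ := mem_verts.mp hv1
    obtain ⟨f, hf, hvf⟩ := mem_verts.mp hv2
    have heA : e ∈ A := (Finset.mem_sdiff.mp he).1
    have hfB : f ∈ B := (Finset.mem_inter.mp hf).2
    have hef : e ≠ f := fun h => (Finset.mem_sdiff.mp he).2 (h ▸ hfB)
    exact hnosh e heA f hfB hef v hve hvf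
  have hTM : Disjoint (verts T) (verts M) := by
    rw [Finset.disjoint_left]
    intro v hv1 hv2
    obtain ⟨e, he, hve⟩ := mem_verts.mp hv1
    obtain ⟨f, hf, hvf⟩ := mem_verts.mp hv2
    have heB : e ∈ B := (Finset.mem_sdiff.mp he).1
    have hfA : f ∈ A := (Finset.mem_inter.mp hf).1
    have hef : f ≠ e := fun h => (Finset.mem_sdiff.mp he).2 (h ▸ hfA)
    exact hnosh f hfA e heB hef v hvf hve
  -- card of verts M = 2 * M.card
  have hMverts : (verts M).card = 2 * M.card := by
    rw [verts, Finset.card_biUnion]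
    · rw [Finset.sum_congr rfl (fun e he => ends_card (hA (Finset.mem_inter.mp he).1)),
        Finset.sum_const, smul_eq_mul, mul_comm]
    · intro e he f hf hef
      rw [Function.onFun, Finset.disjoint_left]
      intro v hv1 hv2
      rw [mem_ends] at hv1 hv2
      exact hnosh e (Finset.mem_inter.mp he).1 f (Finset.mem_inter.mp hf).2 hef v hv1 hv2
  -- total bound
  have htot : (verts S).card + (verts T).card + (verts M).card ≤ 20 := by
    have h1 : ((verts S ∪ verts T) ∪ verts M).card ≤ 20 := by
      have := Finset.card_le_univ ((verts S ∪ verts T) ∪ verts M)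
      simpa using this
    rwa [Finset.card_union_of_disjoint (by
        rw [Finset.disjoint_union_left]; exact ⟨hSM, hTM⟩),
      Finset.card_union_of_disjoint hST] at h1
  -- subset edge sets
  have hSsub : ∀ e ∈ S, e ∈ (gridGraph 4 5).edgeSet := fun e he => hA (Finset.mem_sdiff.mp he).1
  have hTsub : ∀ e ∈ T, e ∈ (gridGraph 4 5).edgeSet := fun e he => hB (Finset.mem_sdiff.mp he).1
  rcases le_total (verts S).card (verts T).card with hle | hle
  · have h10 : (verts S).card ≤ 10 := by omega
    have := count_bound S hSsub h10
    omega
  · have h10 : (verts T).card ≤ 10 := by omega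
    have := count_bound T hTsub h10
    omega

open Fin.NatCast in
def pe (a : ℕ) (b : ℕ) (c : ℕ) (d : ℕ) : Sym2 GV := s(((a : Fin 4), (b : Fin 5)), ((c : Fin 4), (d : Fin 5)))

def E1 : Finset (Sym2 GV) :=
  {pe 0 0 0 1, pe 0 1 0 2, pe 0 2 0 3, pe 0 3 0 4,
   pe 1 0 1 1, pe 1 1 1 2, pe 1 2 1 3, pe 1 3 1 4,
   pe 0 0 1 0, pe 0 1 1 1, pe 0 2 1 2, pe 0 3 1 3, pe 0 4 1 4}

def E2 : Finset (Sym2 GV) :=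
  {pe 2 0 2 1, pe 2 1 2 2, pe 2 2 2 3, pe 2 3 2 4,
   pe 3 0 3 1, pe 3 1 3 2, pe 3 2 3 3, pe 3 3 3 4,
   pe 2 0 3 0, pe 2 1 3 1, pe 2 2 3 2, pe 2 3 3 3, pe 2 4 3 4}

lemma E1card : E1.card = 13 := by decide
lemma E2card : E2.card = 13 := by decide

lemma E1sub : ∀ e ∈ E1, e ∈ (gridGraph 4 5).edgeSet := by
  intro e he
  fin_cases he <;>
    · rw [pe, SimpleGraph.mem_edgeSet, gridGraph, SimpleGraph.boxProd_adj]
      simp only [SimpleGraph.pathGraph_adj]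
      decide

lemma E2sub : ∀ e ∈ E2, e ∈ (gridGraph 4 5).edgeSet := by
  intro e he
  fin_cases he <;>
    · rw [pe, SimpleGraph.mem_edgeSet, gridGraph, SimpleGraph.boxProd_adj]
      simp only [SimpleGraph.pathGraph_adj]
      decide

set_option maxRecDepth 10000 in
lemma noShare' : ∀ e ∈ E1, ∀ f ∈ E2, ∀ v : GV, v ∈ e → v ∈ f → False := by decide

lemma noShare : ∀ e ∈ E1, ∀ f ∈ E2, ¬ shareVertex e f := by
  intro e he f hf ⟨v, hv1, hv2⟩
  exact noShare' e he f hf v hv1 hv2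

set_option maxRecDepth 10000 in
lemma E1E2disj : ∀ e ∈ E1, e ∉ E2 := by decide

lemma lower_bound : ∀ r : ℕ, 0 < r → r ≤ 13 → ¬ SuperLineComplete (gridGraph 4 5) r := by
  intro r h1 h2 hsc
  obtain ⟨A, hAsub, hAcard⟩ := Finset.exists_subset_card_eq (s := E1) (n := r) (by rw [E1card]; exact h2)
  obtain ⟨B, hBsub, hBcard⟩ := Finset.exists_subset_card_eq (s := E2) (n := r) (by rw [E2card]; exact h2)
  have hABne : A ≠ B := by
    obtain ⟨e, he⟩ := Finset.card_pos.mp (hAcard ▸ h1)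
    intro h
    exact E1E2disj e (hAsub he) (hBsub (h ▸ he))
  obtain ⟨e, he, f, hf, hef, hsh⟩ := hsc A B
    (fun e he => E1sub e (hAsub he)) (fun f hf => E2sub f (hBsub hf)) hAcard hBcard hABne
  exact noShare e (hAsub he) f (hBsub hf) hsh

theorem lc_grid_four_five : lcIs (gridGraph 4 5) 14 := by
  constructor
  · exact ⟨by norm_num, complete14⟩
  · intro r hr
    by_contra hlt
    push_neg at hlt
    exact lower_bound r hr.1 (by omega) hr.2
end

section
/- lc(P_5 × P_7) = 26 for the grid graph P_5 × P_7. -/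
open SimpleGraph

/-! ### infrastructure -/

abbrev V5 : Type := Fin 5 × Fin 7

lemma grid_adj_iff (u v : V5) : (gridGraph 5 7).Adj u v ↔
    ((u.1.val + 1 = v.1.val ∨ v.1.val + 1 = u.1.val) ∧ u.2 = v.2) ∨
    ((u.2.val + 1 = v.2.val ∨ v.2.val + 1 = u.2.val) ∧ u.1 = v.1) := by
  rw [gridGraph, boxProd_adj, pathGraph_adj, pathGraph_adj]

instance gridAdjDec : DecidableRel (gridGraph 5 7).Adj :=
  fun u v => decidable_of_iff _ (grid_adj_iff u v).symm

instance shareDec (e f : Sym2 V5) : Decidable (shareVertex e f) :=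
  decidable_of_iff (∃ v, v ∈ e ∧ v ∈ f) Iff.rfl

/-- every edge of the grid, in canonical orientation -/
lemma edge_cases {e : Sym2 V5} (he : e ∈ (gridGraph 5 7).edgeSet) :
    ∃ u v : V5, e = s(u, v) ∧
      ((u.2 = v.2 ∧ u.1.val + 1 = v.1.val) ∨ (u.1 = v.1 ∧ u.2.val + 1 = v.2.val)) := by
  induction e using Sym2.ind with
  | _ a b =>
    rw [SimpleGraph.mem_edgeSet, grid_adj_iff] at he
    rcases he with ⟨h1 | h1, h2⟩ | ⟨h1 | h1, h2⟩
    · exact ⟨a, b, rfl, Or.inl ⟨h2, h1⟩⟩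
    · exact ⟨b, a, Sym2.eq_swap, Or.inl ⟨h2.symm, h1⟩⟩
    · exact ⟨a, b, rfl, Or.inr ⟨h2, h1⟩⟩
    · exact ⟨b, a, Sym2.eq_swap, Or.inr ⟨h2.symm, h1⟩⟩

/-! ### The counterexample at r = 25 -/

def inA (v : V5) : Prop := v.2.val < 3 ∨ (v.2.val = 3 ∧ v.1.val < 2)
def inB (v : V5) : Prop := 3 < v.2.val ∨ (v.2.val = 3 ∧ 2 < v.1.val)

instance : DecidablePred inA := fun v => by unfold inA; infer_instance
instance : DecidablePred inB := fun v => by unfold inB; infer_instance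

def A25 : Finset (Sym2 V5) := (gridGraph 5 7).edgeFinset.filter (fun e => ∀ v ∈ e, inA v)
def B25 : Finset (Sym2 V5) := (gridGraph 5 7).edgeFinset.filter (fun e => ∀ v ∈ e, inB v)

set_option maxRecDepth 100000 in
lemma A25_card : A25.card = 25 := by decide

set_option maxRecDepth 100000 in
lemma B25_card : B25.card = 25 := by decide

lemma A25_edges : ↑A25 ⊆ (gridGraph 5 7).edgeSet := by
  intro e he
  simp only [A25, Finset.coe_filter, Set.mem_setOf_eq, Finset.mem_coe] at he
  exact SimpleGraph.mem_edgeFinset.mp he.1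

lemma B25_edges : ↑B25 ⊆ (gridGraph 5 7).edgeSet := by
  intro e he
  simp only [B25, Finset.coe_filter, Set.mem_setOf_eq, Finset.mem_coe] at he
  exact SimpleGraph.mem_edgeFinset.mp he.1

lemma AB_noshare : ∀ e ∈ A25, ∀ f ∈ B25, ¬ shareVertex e f := by
  intro e he f hf ⟨v, hve, hvf⟩
  simp only [A25, Finset.mem_filter] at he
  simp only [B25, Finset.mem_filter] at hf
  have h1 := he.2 v hve
  have h2 := hf.2 v hvf
  unfold inA at h1; unfold inB at h2
  omega

lemma AB_disj : ∀ e ∈ A25, e ∉ B25 := by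
  intro e he hf
  have hE := A25_edges (Finset.mem_coe.mpr he)
  obtain ⟨u, v, rfl, -⟩ := edge_cases hE
  exact AB_noshare _ he _ hf ⟨u, Sym2.mem_mk_left u v, Sym2.mem_mk_left u v⟩

/-- the lower bound half -/
lemma not_complete_of_le_25 (r : ℕ) (hr0 : 0 < r) (hr : r ≤ 25) :
    ¬ SuperLineComplete (gridGraph 5 7) r := by
  intro H
  obtain ⟨Ar, hAsub, hAcard⟩ := Finset.exists_subset_card_eq (A25_card ▸ hr)
  obtain ⟨Br, hBsub, hBcard⟩ := Finset.exists_subset_card_eq (B25_card ▸ hr)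
  have hne : Ar ≠ Br := by
    obtain ⟨x, hx⟩ := Finset.card_pos.mp (hAcard ▸ hr0)
    intro h
    exact AB_disj x (hAsub hx) (hBsub (h ▸ hx))
  obtain ⟨e, he, f, hf, -, hsh⟩ :=
    H Ar Br (Set.Subset.trans (by exact_mod_cast hAsub) A25_edges)
      (Set.Subset.trans (by exact_mod_cast hBsub) B25_edges) hAcard hBcard hne
  exact AB_noshare e (hAsub he) f (hBsub hf) hsh


def key (v : V5) : ℕ := v.1.val * 7 + v.2.val

lemma key_lt (v : V5) : key v < 35 := by
  have h1 := v.1.isLt; have h2 := v.2.isLt; unfold key; omega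

lemma key_inj {u v : V5} (h : key u = key v) : u = v := by
  have h1 := u.1.isLt; have h2 := u.2.isLt; have h3 := v.1.isLt; have h4 := v.2.isLt
  unfold key at h
  have : u.1.val = v.1.val ∧ u.2.val = v.2.val := by omega
  exact Prod.ext (Fin.ext this.1) (Fin.ext this.2)

/-- classification of an edge: vertical in column j ↦ j; horizontal between j, j+1 ↦ 7 + j -/
def cls (e : Sym2 V5) : ℕ :=
  Sym2.lift ⟨fun u v => if u.2 = v.2 then u.2.val else 7 + min u.2.val v.2.val, by
    intro u v
    dsimp only
    rcases eq_or_ne u.2 v.2 with h | h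
    · simp [h]
    · rw [if_neg h, if_neg (Ne.symm h), Nat.min_comm]⟩ e

def topKey (e : Sym2 V5) : ℕ :=
  Sym2.lift ⟨fun u v => max (key u) (key v), fun u v => Nat.max_comm _ _⟩ e

def botKey (e : Sym2 V5) : ℕ :=
  Sym2.lift ⟨fun u v => min (key u) (key v), fun u v => Nat.min_comm _ _⟩ e

@[simp] lemma cls_mk (u v : V5) :
    cls s(u, v) = if u.2 = v.2 then u.2.val else 7 + min u.2.val v.2.val := rfl
@[simp] lemma topKey_mk (u v : V5) : topKey s(u, v) = max (key u) (key v) := rfl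
@[simp] lemma botKey_mk (u v : V5) : botKey s(u, v) = min (key u) (key v) := rfl

/-- canonical description of a vertical edge -/
lemma vert_desc {e : Sym2 V5} (he : e ∈ (gridGraph 5 7).edgeSet) (hc : cls e < 7) :
    ∃ u v : V5, e = s(u, v) ∧ u.2 = v.2 ∧ u.1.val + 1 = v.1.val ∧
      topKey e = key v ∧ botKey e = key u ∧ key v = key u + 7 ∧ u.2.val = cls e := by
  obtain ⟨u, v, rfl, h | h⟩ := edge_cases he
  · refine ⟨u, v, rfl, h.1, h.2, ?_⟩
    have hk : key v = key u + 7 := by unfold key; rw [← h.1, ← h.2]; ring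
    have hcls : cls s(u, v) = u.2.val := by rw [cls_mk, if_pos h.1]
    rw [topKey_mk, botKey_mk, hcls]
    omega
  · exfalso
    rw [cls_mk, if_neg (by intro hh; rw [hh] at h; omega)] at hc
    omega

/-- canonical description of a horizontal edge -/
lemma horiz_desc {e : Sym2 V5} (he : e ∈ (gridGraph 5 7).edgeSet) (hc : 7 ≤ cls e) :
    ∃ u v : V5, e = s(u, v) ∧ u.1 = v.1 ∧ u.2.val + 1 = v.2.val ∧
      topKey e = key v ∧ botKey e = key u ∧ key v = key u + 1 ∧ 7 + u.2.val = cls e := by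
  obtain ⟨u, v, rfl, h | h⟩ := edge_cases he
  · exfalso
    rw [cls_mk, if_pos h.1] at hc
    have := u.2.isLt; omega
  · refine ⟨u, v, rfl, h.1, h.2, ?_⟩
    have hk : key v = key u + 1 := by unfold key; rw [← h.1] at *; omega
    have hne : u.2 ≠ v.2 := by intro hh; rw [hh] at h; omega
    have hcls : cls s(u, v) = 7 + min u.2.val v.2.val := by rw [cls_mk, if_neg hne]
    rw [topKey_mk, botKey_mk, hcls]
    omega

def VS (S : Finset (Sym2 V5)) : Finset V5 := Finset.univ.filter (fun v => ∃ e ∈ S, v ∈ e)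

lemma mem_VS {S : Finset (Sym2 V5)} {v : V5} : v ∈ VS S ↔ ∃ e ∈ S, v ∈ e := by
  simp [VS]

def Tj (S : Finset (Sym2 V5)) (j : ℕ) : Finset V5 := (VS S).filter (fun v => v.2.val = j)
def dj (S : Finset (Sym2 V5)) (j : ℕ) : ℕ := (Tj S j).card

lemma dj_le5 (S : Finset (Sym2 V5)) (j : ℕ) : dj S j ≤ 5 := by
  have : (Tj S j).card ≤ (Finset.univ : Finset (Fin 5)).card := by
    apply Finset.card_le_card_of_injOn (fun v => v.1) (fun v _ => Finset.mem_univ _)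
    intro u hu v hv h
    simp only [Tj, Finset.mem_coe, Finset.mem_filter] at hu hv
    exact Prod.ext h (Fin.ext (hu.2.trans hv.2.symm))
  simpa [dj] using this

lemma sum_dj (S : Finset (Sym2 V5)) : ∑ j ∈ Finset.range 7, dj S j = (VS S).card := by
  symm
  exact Finset.card_eq_sum_card_fiberwise (fun v _ => Finset.mem_range.mpr v.2.isLt)

lemma vert_bound {S : Finset (Sym2 V5)} (hS : ↑S ⊆ (gridGraph 5 7).edgeSet) {j : ℕ}
    (hj : j < 7) : (S.filter (fun e => cls e = j)).card ≤ dj S j - 1 := by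
  set F := S.filter (fun e => cls e = j) with hF
  rcases F.eq_empty_or_nonempty with h | ⟨e0, he0⟩
  · simp [h]
  have desc : ∀ e ∈ F, ∃ u v : V5, e = s(u, v) ∧ u.2 = v.2 ∧ u.1.val + 1 = v.1.val ∧
      topKey e = key v ∧ botKey e = key u ∧ key v = key u + 7 ∧ u.2.val = cls e := by
    intro e he
    rw [hF, Finset.mem_filter] at he
    exact vert_desc (hS he.1) (he.2 ▸ hj)
  have memT : ∀ e ∈ F, ∀ w, w ∈ e → w ∈ Tj S j := by
    intro e he w hw
    rw [Tj, Finset.mem_filter]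
    have he' := he
    rw [hF, Finset.mem_filter] at he'
    refine ⟨mem_VS.mpr ⟨e, he'.1, hw⟩, ?_⟩
    obtain ⟨u, v, heq, hcol, -, -, -, -, hcls⟩ := desc e he
    rw [heq] at hw
    have hcol' : u.2.val = v.2.val := by rw [hcol]
    have hclsj : cls e = j := he'.2
    rcases Sym2.mem_iff.mp hw with h | h <;> rw [h] <;> omega
  set K := (Tj S j).image key with hK
  have hKne : K.Nonempty := by
    obtain ⟨u, v, he0eq, -⟩ := desc e0 he0
    exact ⟨key u, Finset.mem_image_of_mem key (memT e0 he0 u (he0eq ▸ Sym2.mem_mk_left u v))⟩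
  have hcard : F.card ≤ (K.erase (K.min' hKne)).card := by
    apply Finset.card_le_card_of_injOn topKey
    · intro e he
      obtain ⟨u, v, heq, -, -, htop, hbot, hk7, -⟩ := desc e he
      rw [Finset.mem_coe, Finset.mem_erase]
      constructor
      · have hbotK : key u ∈ K := Finset.mem_image_of_mem key
          (memT e he u (heq ▸ Sym2.mem_mk_left u v))
        have := K.min'_le _ hbotK
        omega
      · rw [htop]
        exact Finset.mem_image_of_mem key (memT e he v (heq ▸ Sym2.mem_mk_right u v))
    · intro e1 h1 e2 h2 htK
      simp only [Finset.mem_coe] at h1 h2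
      obtain ⟨u1, v1, heq1, -, -, ht1, -, hk1, -⟩ := desc e1 h1
      obtain ⟨u2, v2, heq2, -, -, ht2, -, hk2, -⟩ := desc e2 h2
      have hv : v1 = v2 := key_inj (by omega)
      have hu : u1 = u2 := key_inj (by omega)
      rw [heq1, heq2, hu, hv]
  calc F.card ≤ (K.erase (K.min' hKne)).card := hcard
    _ = K.card - 1 := Finset.card_erase_of_mem (K.min'_mem hKne)
    _ ≤ dj S j - 1 := by
        have : K.card ≤ (Tj S j).card := Finset.card_image_le
        unfold dj; omega

lemma horiz_bound {S : Finset (Sym2 V5)} (hS : ↑S ⊆ (gridGraph 5 7).edgeSet) {j : ℕ}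
    (hj : j < 6) : (S.filter (fun e => cls e = 7 + j)).card ≤ min (dj S j) (dj S (j + 1)) := by
  set F := S.filter (fun e => cls e = 7 + j) with hF
  have desc : ∀ e ∈ F, ∃ u v : V5, e = s(u, v) ∧ u.1 = v.1 ∧ u.2.val + 1 = v.2.val ∧
      topKey e = key v ∧ botKey e = key u ∧ key v = key u + 1 ∧ u.2.val = j ∧ v.2.val = j + 1 := by
    intro e he
    rw [hF, Finset.mem_filter] at he
    obtain ⟨u, v, heq, hrow, hcol, ht, hb, hk, hcls⟩ := horiz_desc (hS he.1) (by omega)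
    exact ⟨u, v, heq, hrow, hcol, ht, hb, hk, by omega, by omega⟩
  have memS : ∀ e ∈ F, e ∈ S := by
    intro e he; rw [hF, Finset.mem_filter] at he; exact he.1
  refine le_min ?_ ?_
  · have h1 : F.card ≤ ((Tj S j).image key).card := by
      refine Finset.card_le_card_of_injOn botKey ?_ ?_
      · intro e he
        obtain ⟨u, v, heq, -, -, -, hbot, -, hu2, -⟩ := desc e he
        rw [hbot]
        refine Finset.mem_image_of_mem key ?_
        rw [Tj, Finset.mem_filter]
        exact ⟨mem_VS.mpr ⟨e, memS e he, heq ▸ Sym2.mem_mk_left u v⟩, hu2⟩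
      · intro e1 h1 e2 h2 htK
        simp only [Finset.mem_coe] at h1 h2
        obtain ⟨u1, v1, heq1, -, -, -, hb1, hk1, -⟩ := desc e1 h1
        obtain ⟨u2, v2, heq2, -, -, -, hb2, hk2, -⟩ := desc e2 h2
        have hu : u1 = u2 := key_inj (by omega)
        have hv : v1 = v2 := key_inj (by omega)
        rw [heq1, heq2, hu, hv]
    calc F.card ≤ ((Tj S j).image key).card := h1
      _ ≤ dj S j := Finset.card_image_le
  · have h1 : F.card ≤ ((Tj S (j + 1)).image key).card := by
      refine Finset.card_le_card_of_injOn topKey ?_ ?_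
      · intro e he
        obtain ⟨u, v, heq, -, -, htop, -, -, -, hv2⟩ := desc e he
        rw [htop]
        refine Finset.mem_image_of_mem key ?_
        rw [Tj, Finset.mem_filter]
        exact ⟨mem_VS.mpr ⟨e, memS e he, heq ▸ Sym2.mem_mk_right u v⟩, hv2⟩
      · intro e1 h1 e2 h2 htK
        simp only [Finset.mem_coe] at h1 h2
        obtain ⟨u1, v1, heq1, -, -, ht1, -, hk1, -⟩ := desc e1 h1
        obtain ⟨u2, v2, heq2, -, -, ht2, -, hk2, -⟩ := desc e2 h2
        have hv : v1 = v2 := key_inj (by omega)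
        have hu : u1 = u2 := key_inj (by omega)
        rw [heq1, heq2, hu, hv]
    calc F.card ≤ ((Tj S (j + 1)).image key).card := h1
      _ ≤ dj S (j + 1) := Finset.card_image_le

/-! ### arithmetic tables -/

def Ftab (n : ℕ) : ℕ := [0,0,1,2,4,5,7,8,10,12,13,15,17,18,20,22,24,25,27,29,31,32,34,36,38,40,41,43,45,47,49,50,52,54,56,58].getD n 58

def G1 (p s : ℕ) : ℕ := ([[0, 0, 1, 2, 4, 5, 7, 8, 10, 12, 13, 15, 17, 18, 20, 22, 0, 0, 0, 0, 0], [0, 0, 1, 2, 3, 5, 6, 8, 9, 11, 13, 14, 16, 18, 19, 21, 23, 0, 0, 0, 0], [0, 0, 1, 2, 4, 5, 7, 8, 10, 11, 13, 15, 16, 18, 20, 21, 23, 25, 0, 0, 0], [0, 0, 0, 2, 3, 5, 7, 8, 10, 12, 13, 15, 17, 18, 20, 22, 23, 25, 27, 0, 0], [0, 0, 0, 0, 3, 4, 6, 8, 10, 11, 13, 15, 17, 18, 20, 22, 24, 25, 27, 29, 0], [0, 0, 0, 0, 0, 4, 5, 7, 9, 11, 13, 14, 16, 18, 20, 22, 23,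 25, 27, 29, 31]].getD p []).getD s 0

def G2 (q t : ℕ) : ℕ := ([[0, 0, 1, 2, 4, 5, 7, 8, 10, 11, 13, 0, 0, 0, 0, 0], [0, 0, 1, 2, 3, 5, 6, 8, 9, 11, 12, 14, 0, 0, 0, 0], [0, 0, 1, 2, 4, 5, 7, 8, 10, 11, 13, 14, 16, 0, 0, 0], [0, 0, 0, 2, 3, 5, 7, 8, 10, 12, 13, 15, 16, 18, 0, 0], [0, 0, 0, 0, 3, 4, 6, 8, 10, 11, 13, 15, 17, 18, 20, 0], [0, 0, 0, 0, 0, 4, 5, 7, 9, 11, 13, 14, 16, 18, 20, 22]].getD q []).getD t 0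

theorem lemG1 : ∀ a b c d : Fin 6, (a.val-1)+(b.val-1)+(c.val-1)+(d.val-1)+min a.val b.val + min b.val c.val + min c.val d.val ≤ G1 d.val (a.val+b.val+c.val+d.val) := by decide

theorem lemG2 : ∀ e f g : Fin 6, (e.val-1)+(f.val-1)+(g.val-1)+min e.val f.val+min f.val g.val ≤ G2 e.val (e.val+f.val+g.val) := by decide

set_option maxHeartbeats 4000000 in
theorem lemComb : ∀ p q : Fin 6, ∀ s : Fin 21, ∀ t : Fin 16, p.val ≤ s.val → q.val ≤ t.val → G1 p.val s.val + min p.val q.val + G2 q.val t.val ≤ Ftab (s.val+t.val) := by decide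

set_option maxHeartbeats 1000000 in
theorem lemFin : ∀ n1 n2 : Fin 36, n1.val + n2.val ≤ 35 → min (Ftab n1.val) (Ftab n2.val) + (35 - n1.val - n2.val)/2 ≤ 25 := by decide

lemma cbBound {d0 d1 d2 d3 d4 d5 d6 : ℕ} (h0 : d0 ≤ 5) (h1 : d1 ≤ 5) (h2 : d2 ≤ 5)
    (h3 : d3 ≤ 5) (h4 : d4 ≤ 5) (h5 : d5 ≤ 5) (h6 : d6 ≤ 5) :
    (d0-1)+(d1-1)+(d2-1)+(d3-1)+(d4-1)+(d5-1)+(d6-1)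
      + min d0 d1 + min d1 d2 + min d2 d3 + min d3 d4 + min d4 d5 + min d5 d6
      ≤ Ftab (d0+d1+d2+d3+d4+d5+d6) := by
  have g1 := lemG1 ⟨d0, by omega⟩ ⟨d1, by omega⟩ ⟨d2, by omega⟩ ⟨d3, by omega⟩
  have g2 := lemG2 ⟨d4, by omega⟩ ⟨d5, by omega⟩ ⟨d6, by omega⟩
  have cmb := lemComb ⟨d3, by omega⟩ ⟨d4, by omega⟩ ⟨d0+d1+d2+d3, by omega⟩
      ⟨d4+d5+d6, by omega⟩ (by simp only [Fin.val_mk]; omega) (by simp only [Fin.val_mk]; omega)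
  simp only [Fin.val_mk] at g1 g2 cmb
  rw [show d0+d1+d2+d3+(d4+d5+d6) = d0+d1+d2+d3+d4+d5+d6 by ring] at cmb
  omega

/-! ### the master counting lemma -/

lemma Ecount {S : Finset (Sym2 V5)} (hS : ↑S ⊆ (gridGraph 5 7).edgeSet) :
    S.card ≤ Ftab ((VS S).card) := by
  have hmem : ∀ e ∈ S, cls e ∈ Finset.range 13 := by
    intro e he
    rcases edge_cases (hS he) with ⟨u, v, rfl, h | h⟩
    · have h2 := u.2.isLt
      rw [Finset.mem_range, cls_mk, if_pos h.1]; omega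
    · have hne : u.2 ≠ v.2 := by
        intro hh; have := h.2; rw [hh] at this; omega
      have h2 := u.2.isLt; have h3 := v.2.isLt
      rw [Finset.mem_range, cls_mk, if_neg hne]; omega
  have hcard := Finset.card_eq_sum_card_fiberwise hmem
  have v0 := vert_bound hS (j := 0) (by norm_num)
  have v1 := vert_bound hS (j := 1) (by norm_num)
  have v2 := vert_bound hS (j := 2) (by norm_num)
  have v3 := vert_bound hS (j := 3) (by norm_num)
  have v4 := vert_bound hS (j := 4) (by norm_num)
  have v5 := vert_bound hS (j := 5) (by norm_num)
  have v6 := vert_bound hS (j := 6) (by norm_num)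
  have b0 : (S.filter (fun e => cls e = 7)).card ≤ min (dj S 0) (dj S 1) := by
    simpa using horiz_bound hS (j := 0) (by norm_num)
  have b1 : (S.filter (fun e => cls e = 8)).card ≤ min (dj S 1) (dj S 2) := by
    simpa using horiz_bound hS (j := 1) (by norm_num)
  have b2 : (S.filter (fun e => cls e = 9)).card ≤ min (dj S 2) (dj S 3) := by
    simpa using horiz_bound hS (j := 2) (by norm_num)
  have b3 : (S.filter (fun e => cls e = 10)).card ≤ min (dj S 3) (dj S 4) := by
    simpa using horiz_bound hS (j := 3) (by norm_num)
  have b4 : (S.filter (fun e => cls e = 11)).card ≤ min (dj S 4) (dj S 5) := by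
    simpa using horiz_bound hS (j := 4) (by norm_num)
  have b5 : (S.filter (fun e => cls e = 12)).card ≤ min (dj S 5) (dj S 6) := by
    simpa using horiz_bound hS (j := 5) (by norm_num)
  have hsum : dj S 0 + dj S 1 + dj S 2 + dj S 3 + dj S 4 + dj S 5 + dj S 6 = (VS S).card := by
    have := sum_dj S
    simp only [Finset.sum_range_succ, Finset.sum_range_zero] at this
    omega
  have hcb := cbBound (dj_le5 S 0) (dj_le5 S 1) (dj_le5 S 2) (dj_le5 S 3) (dj_le5 S 4)
      (dj_le5 S 5) (dj_le5 S 6)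
  rw [hsum] at hcb
  rw [hcard]
  simp only [Finset.sum_range_succ, Finset.sum_range_zero]
  omega

lemma share_symm {e f : Sym2 V5} (h : shareVertex e f) : shareVertex f e := by
  obtain ⟨v, h1, h2⟩ := h; exact ⟨v, h2, h1⟩

lemma VS_card_matching {C : Finset (Sym2 V5)} (hC : ↑C ⊆ (gridGraph 5 7).edgeSet)
    (hm : ∀ e ∈ C, ∀ f ∈ C, e ≠ f → ¬ shareVertex e f) : (VS C).card = 2 * C.card := by
  have hrw : VS C = C.biUnion (fun e => Finset.univ.filter (· ∈ e)) := by
    ext v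
    simp [mem_VS]
  rw [hrw, Finset.card_biUnion]
  · rw [Finset.sum_congr rfl (g := fun _ => 2), Finset.sum_const, smul_eq_mul, Nat.mul_comm]
    intro e he
    obtain ⟨u, v, rfl, h⟩ := edge_cases (hC he)
    have huv : u ≠ v := by
      intro hh
      rcases h with h | h
      · have := h.2; rw [hh] at this; omega
      · have := h.2; rw [hh] at this; omega
    have : Finset.univ.filter (· ∈ s(u,v)) = {u, v} := by
      ext w
      simp [Sym2.mem_iff]
    rw [this, Finset.card_pair huv]
  · intro e he f hf hef
    rw [Function.onFun, Finset.disjoint_left]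
    intro v hv1 hv2
    simp only [Finset.mem_filter] at hv1 hv2
    exact hm e he f hf hef ⟨v, hv1.2, hv2.2⟩

lemma complete26 : SuperLineComplete (gridGraph 5 7) 26 := by
  intro A B hA hB cA cB hne
  by_contra hcon
  push_neg at hcon
  set D := A \ B with hD
  set E := B \ A with hE
  set C := A ∩ B with hC
  have hDE : ∀ e ∈ D, ∀ f ∈ E, ¬ shareVertex e f := by
    intro e he f hf
    rw [hD, Finset.mem_sdiff] at he
    rw [hE, Finset.mem_sdiff] at hf
    exact hcon e he.1 f hf.1 (fun hh => he.2 (hh ▸ hf.1))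
  have hDC : ∀ e ∈ D, ∀ f ∈ C, ¬ shareVertex e f := by
    intro e he f hf
    rw [hD, Finset.mem_sdiff] at he
    rw [hC, Finset.mem_inter] at hf
    exact hcon e he.1 f hf.2 (fun hh => he.2 (hh ▸ hf.2))
  have hEC : ∀ e ∈ E, ∀ f ∈ C, ¬ shareVertex e f := by
    intro e he f hf hsh
    rw [hE, Finset.mem_sdiff] at he
    rw [hC, Finset.mem_inter] at hf
    exact hcon f hf.1 e he.1 (fun hh => he.2 (hh ▸ hf.1)) (share_symm hsh)
  have hCC : ∀ e ∈ C, ∀ f ∈ C, e ≠ f → ¬ shareVertex e f := by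
    intro e he f hf hef
    rw [hC, Finset.mem_inter] at he hf
    exact hcon e he.1 f hf.2 hef
  have hDsub : ↑D ⊆ (gridGraph 5 7).edgeSet :=
    Set.Subset.trans (by exact_mod_cast Finset.sdiff_subset) hA
  have hEsub : ↑E ⊆ (gridGraph 5 7).edgeSet :=
    Set.Subset.trans (by exact_mod_cast Finset.sdiff_subset) hB
  have hCsub : ↑C ⊆ (gridGraph 5 7).edgeSet :=
    Set.Subset.trans (by exact_mod_cast Finset.inter_subset_left) hA
  -- pairwise disjoint vertex sets
  have hdisjDE : Disjoint (VS D) (VS E) := by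
    rw [Finset.disjoint_left]
    intro v hv1 hv2
    obtain ⟨e, he, hve⟩ := mem_VS.mp hv1
    obtain ⟨f, hf, hvf⟩ := mem_VS.mp hv2
    exact hDE e he f hf ⟨v, hve, hvf⟩
  have hdisjDC : Disjoint (VS D) (VS C) := by
    rw [Finset.disjoint_left]
    intro v hv1 hv2
    obtain ⟨e, he, hve⟩ := mem_VS.mp hv1
    obtain ⟨f, hf, hvf⟩ := mem_VS.mp hv2
    exact hDC e he f hf ⟨v, hve, hvf⟩
  have hdisjEC : Disjoint (VS E) (VS C) := by
    rw [Finset.disjoint_left]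
    intro v hv1 hv2
    obtain ⟨e, he, hve⟩ := mem_VS.mp hv1
    obtain ⟨f, hf, hvf⟩ := mem_VS.mp hv2
    exact hEC e he f hf ⟨v, hve, hvf⟩
  have htot : (VS D).card + (VS E).card + (VS C).card ≤ 35 := by
    have h1 : (VS D ∪ VS E ∪ VS C).card ≤ (Finset.univ : Finset V5).card :=
      Finset.card_le_card (Finset.subset_univ _)
    have h2 : (Finset.univ : Finset V5).card = 35 := by decide
    rw [Finset.card_union_of_disjoint, Finset.card_union_of_disjoint hdisjDE] at h1
    · omega
    · exact Finset.disjoint_union_left.mpr ⟨hdisjDC, hdisjEC⟩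
  have hmatch : (VS C).card = 2 * C.card := VS_card_matching hCsub hCC
  have hDcard : D.card + C.card = 26 := by
    rw [hD, hC]; rw [Finset.card_sdiff_add_card_inter]; exact cA
  have hEcard : E.card + C.card = 26 := by
    rw [hE, hC, Finset.inter_comm]; rw [Finset.card_sdiff_add_card_inter]; exact cB
  have eD := Ecount hDsub
  have eE := Ecount hEsub
  have lf := lemFin ⟨(VS D).card, by omega⟩ ⟨(VS E).card, by omega⟩
      (by simp only [Fin.val_mk]; omega)
  simp only [Fin.val_mk] at lf
  omega


theorem lc_grid_five_seven : lcIs (gridGraph 5 7) 26 := by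
  constructor
  · exact ⟨by norm_num, complete26⟩
  · intro r hr
    by_contra h
    push_neg at h
    exact not_complete_of_le_25 r hr.1 (by omega) hr.2
end
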